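/- Let M and M' be image-finite epistemic models (every equivalence class of every ∼_a and ∼'_a is finite), and let R ⊆ S × S' be the relation defined by (s,s') ∈ R iff for every positive formula φ ∈ L_EL⁺, M_s ⊨ φ implies M'_{s'} ⊨ φ. If R is nonempty, then R is a refinement from M to M'. -/

import Mathlib

/-- An epistemic (S5) model. -/
structure EpiModel (A P : Type) where
  S : Type
  ne : Nonempty S
  rel : A → S → S → Prop
  equiv : ∀ a, Equivalence (rel a)
  val : P → Set S

/-- The language L_EL of epistemic logic. -/
inductive ELForm (A P : Type) where
  | atom : P → ELForm A P
  | neg : ELForm A P → ELForm A P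
  | and : ELForm A P → ELForm A P → ELForm A P
  | know : A → ELForm A P → ELForm A P

/-- Satisfaction of epistemic formulas. -/
def ELForm.sat {A P : Type} (M : EpiModel A P) : ELForm A P → M.S → Prop
  | .atom p, s => s ∈ M.val p
  | .neg φ, s => ¬ ELForm.sat M φ s
  | .and φ ψ, s => ELForm.sat M φ s ∧ ELForm.sat M ψ s
  | .know a φ, s => ∀ t, M.rel a s t → ELForm.sat M φ t

/-- Positive formulas L_EL⁺. -/
inductive PosForm (A P : Type) where
  | atom : P → PosForm A P
  | natom : P → PosForm A P
  | and : PosForm A P → PosForm A P → PosForm A P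
  | or : PosForm A P → PosForm A P → PosForm A P
  | know : A → PosForm A P → PosForm A P

/-- Satisfaction of positive formulas. -/
def PosForm.sat {A P : Type} (M : EpiModel A P) : PosForm A P → M.S → Prop
  | .atom p, s => s ∈ M.val p
  | .natom p, s => s ∉ M.val p
  | .and φ ψ, s => PosForm.sat M φ s ∧ PosForm.sat M ψ s
  | .or φ ψ, s => PosForm.sat M φ s ∨ PosForm.sat M ψ s
  | .know a φ, s => ∀ t, M.rel a s t → PosForm.sat M φ t

/-- A refinement from `M` to `M'`: a nonempty relation satisfying **atoms**
and **back**. -/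
def IsRefinement {A P : Type} (M M' : EpiModel A P) (R : M.S → M'.S → Prop) : Prop :=
  (∃ s s', R s s') ∧
  ∀ s s', R s s' →
    (∀ p, s ∈ M.val p ↔ s' ∈ M'.val p) ∧
    (∀ a t', M'.rel a s' t' → ∃ t, M.rel a s t ∧ R t t')

/-- `M_t` is a refinement of `M_s` (within the single model `M`). -/
def RefinesIn {A P : Type} (M : EpiModel A P) (s t : M.S) : Prop :=
  ∃ R, IsRefinement M M R ∧ R s t


lemma sat_foldr_or {A P : Type} (M : EpiModel A P) (φ : PosForm A P)
    (l : List (PosForm A P)) (x : M.S) :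
    PosForm.sat M (l.foldr .or φ) x ↔
      PosForm.sat M φ x ∨ ∃ ψ ∈ l, PosForm.sat M ψ x := by
  induction l with
  | nil => simp
  | cons h t ih =>
    simp only [List.foldr_cons, PosForm.sat, ih, List.mem_cons]
    constructor
    · rintro (h1 | h1 | ⟨ψ, h2, h3⟩)
      · exact Or.inr ⟨h, Or.inl rfl, h1⟩
      · exact Or.inl h1
      · exact Or.inr ⟨ψ, Or.inr h2, h3⟩
    · rintro (h1 | ⟨ψ, (rfl | h2), h3⟩)
      · exact Or.inr (Or.inl h1)
      · exact Or.inl h3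
      · exact Or.inr (Or.inr ⟨ψ, h2, h3⟩)

/-- On image-finite models, the relation relating `s` to `s'`
iff every positive formula true at `M_s` is true at `M'_{s'}` is, when
nonempty, a refinement from `M` to `M'`. -/
theorem positive_implication_is_refinement
    (A P : Type) (M M' : EpiModel A P)
    (hfin : ∀ (a : A) (s : M.S), {t | M.rel a s t}.Finite)
    (hfin' : ∀ (a : A) (s' : M'.S), {t' | M'.rel a s' t'}.Finite)
    (R : M.S → M'.S → Prop)
    (hR : ∀ s s', R s s' ↔ ∀ φ : PosForm A P, PosForm.sat M φ s → PosForm.sat M' φ s')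
    (hne : ∃ s s', R s s') :
    IsRefinement M M' R := by
  classical
  refine ⟨hne, ?_⟩
  intro s s' hss'
  have hsat := (hR s s').mp hss'
  constructor
  · intro p
    constructor
    · intro h; exact hsat (.atom p) h
    · intro h; by_contra hcon
      exact (hsat (.natom p) hcon) h
  · intro a t' ht'
    by_contra hc
    push_neg at hc
    have hs : M.rel a s s := (M.equiv a).refl s
    -- get a default positive formula from the failure at s itself
    have hcs := hc s hs
    rw [hR] at hcs
    push_neg at hcs
    obtain ⟨φ0, _, _⟩ := hcs
    have key : ∀ t : M.S, ∃ φ : PosForm A P,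
        M.rel a s t → PosForm.sat M φ t ∧ ¬ PosForm.sat M' φ t' := by
      intro t
      by_cases ht : M.rel a s t
      · have h1 := hc t ht
        rw [hR] at h1
        push_neg at h1
        obtain ⟨φ, h2, h3⟩ := h1
        exact ⟨φ, fun _ => ⟨h2, h3⟩⟩
      · exact ⟨φ0, fun h => absurd h ht⟩
    choose f hf using key
    set F := (hfin a s).toFinset with hF
    set l := F.toList.map f with hl
    set ψ := PosForm.know a (l.foldr .or (f s)) with hψ
    have hψs : PosForm.sat M ψ s := by
      intro t ht
      rw [sat_foldr_or]
      refine Or.inr ⟨f t, ?_, (hf t ht).1⟩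
      rw [hl]
      exact List.mem_map_of_mem (f := f) (by simp [hF, Set.Finite.mem_toFinset]; exact ht)
    have hψs' := hsat ψ hψs t' ht'
    rw [sat_foldr_or] at hψs'
    rcases hψs' with h1 | ⟨χ, h2, h3⟩
    · exact (hf s hs).2 h1
    · rw [hl] at h2
      obtain ⟨t, h4, rfl⟩ := List.mem_map.mp h2
      have h5 : M.rel a s t := by
        have := Finset.mem_toList.mp h4
        rw [hF, Set.Finite.mem_toFinset] at this
        exact this
      exact (hf t h5).2 h3
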